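/- Let (Ω, 𝔉, P) be a probability space, (H, 𝔥, Λ) a finite measure space, and (p_h)_{h∈H} a jointly measurable [0,1]-valued process on Ω × H. Let π : H → ℝ≥0 be measurable, α ∈ (0,1), and β : ℝ≥0 → ℝ≥0 nondecreasing and right-continuous. For each ω define r̂(ω) := max{r ≥ 0 : Λ({h : p_h(ω) ≤ α π(h) β(r)}) ≥ r}. Then ω ↦ r̂(ω) is measurable, and the rejection set process (ω,h) ↦ 1{p_h(ω) ≤ α π(h) β(r̂(ω))} is jointly measurable on Ω × H. -/

import Mathlib

open MeasureTheory Set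
open scoped ENNReal

/-- The step-up cutoff `r̂(ω) = max{r ≥ 0 : Λ({h : p_h(ω) ≤ α π(h) β(r)}) ≥ r}` is a
measurable function of `ω`, and the step-up rejection indicator
`(ω,h) ↦ 1{p_h(ω) ≤ α π(h) β(r̂(ω))}` is jointly measurable. -/
theorem stepup_measurable
    {Ω H : Type*} [MeasurableSpace Ω] [MeasurableSpace H]
    (P : Measure Ω) [IsProbabilityMeasure P]
    (Λ : Measure H) [IsFiniteMeasure Λ]
    (p : Ω → H → ℝ) (hp : Measurable (fun z : Ω × H => p z.1 z.2))
    (hp01 : ∀ ω h, p ω h ∈ Icc (0:ℝ) 1)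
    (π : H → ℝ) (hπ : Measurable π) (hπ0 : ∀ h, 0 ≤ π h)
    (α : ℝ) (hα : α ∈ Ioo (0:ℝ) 1)
    (β : ℝ → ℝ) (hβ0 : ∀ r, 0 ≤ β r) (hβmono : Monotone β)
    (hβrc : ∀ r : ℝ, ContinuousWithinAt β (Ici r) r)
    (rhat : Ω → ℝ)
    (hrhat : ∀ ω, rhat ω =
      sSup {r : ℝ | 0 ≤ r ∧ ENNReal.ofReal r ≤ Λ {h | p ω h ≤ α * π h * β r}}) :
    Measurable rhat ∧
    MeasurableSet {z : Ω × H | p z.1 z.2 ≤ α * π z.2 * β (rhat z.1)} := by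
  classical
  -- notation
  set V : Ω → ℝ → ℝ≥0∞ := fun ω r => Λ {h | p ω h ≤ α * π h * β r} with hVdef
  have hβm : Measurable β := hβmono.measurable
  -- joint measurability of the level sets
  have hmeasset : ∀ r : ℝ, MeasurableSet {z : Ω × H | p z.1 z.2 ≤ α * π z.2 * β r} := by
    intro r
    exact measurableSet_le hp
      ((measurable_const.mul (hπ.comp measurable_snd)).mul measurable_const)
  have hsecmeas : ∀ (ω : Ω) (r : ℝ), MeasurableSet {h | p ω h ≤ α * π h * β r} := by
    intro ω r
    exact (hmeasset r).preimage (measurable_prodMk_left)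
  -- ω ↦ V ω r is measurable for each fixed r
  have hVmeas : ∀ r : ℝ, Measurable fun ω => V ω r := by
    intro r
    exact measurable_measure_prodMk_left (ν := Λ) (hmeasset r)
  -- monotonicity of V ω in r
  have hsetmono : ∀ ω : Ω, ∀ ⦃r s : ℝ⦄, r ≤ s →
      {h | p ω h ≤ α * π h * β r} ⊆ {h | p ω h ≤ α * π h * β s} := by
    intro ω r s hrs h hh
    have : α * π h * β r ≤ α * π h * β s :=
      mul_le_mul_of_nonneg_left (hβmono hrs)
        (mul_nonneg (le_of_lt hα.1) (hπ0 h))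
    exact le_trans hh this
  have hVmono : ∀ ω : Ω, Monotone (V ω) := by
    intro ω r s hrs
    exact measure_mono (hsetmono ω hrs)
  -- the constraint set
  set T : Ω → Set ℝ := fun ω => {r : ℝ | 0 ≤ r ∧ ENNReal.ofReal r ≤ V ω r} with hTdef
  have h0T : ∀ ω, (0:ℝ) ∈ T ω := by
    intro ω
    refine ⟨le_refl 0, ?_⟩
    simp
  set M : ℝ := (Λ univ).toReal with hMdef
  have hM0 : 0 ≤ M := ENNReal.toReal_nonneg
  have hΛfin : Λ univ ≠ ⊤ := measure_ne_top Λ univ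
  have hboundT : ∀ ω, ∀ r ∈ T ω, r ≤ M := by
    intro ω r hr
    have h1 : ENNReal.ofReal r ≤ Λ univ :=
      le_trans hr.2 (measure_mono (subset_univ _))
    exact (ENNReal.ofReal_le_iff_le_toReal hΛfin).1 h1
  have hbddT : ∀ ω, BddAbove (T ω) := fun ω => ⟨M, fun r hr => hboundT ω r hr⟩
  have hneT : ∀ ω, (T ω).Nonempty := fun ω => ⟨0, h0T ω⟩
  have hrhatT : ∀ ω, rhat ω = sSup (T ω) := hrhat
  have hr0 : ∀ ω, 0 ≤ rhat ω := by
    intro ω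
    rw [hrhatT ω]
    exact le_csSup (hbddT ω) (h0T ω)
  -- the supremum is attained: ofReal (rhat ω) ≤ V ω (rhat ω)
  have hmax : ∀ ω, ENNReal.ofReal (rhat ω) ≤ V ω (rhat ω) := by
    intro ω
    set C : ℝ≥0∞ := V ω (rhat ω) with hC
    have hCfin : C ≠ ⊤ := by
      exact ne_top_of_le_ne_top hΛfin (measure_mono (subset_univ _))
    have hub : ∀ r ∈ T ω, r ≤ C.toReal := by
      intro r hr
      have hrle : r ≤ rhat ω := by
        rw [hrhatT ω]; exact le_csSup (hbddT ω) hr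
      have : ENNReal.ofReal r ≤ C := le_trans hr.2 (hVmono ω hrle)
      exact (ENNReal.ofReal_le_iff_le_toReal hCfin).1 this
    have hle : rhat ω ≤ C.toReal := by
      rw [hrhatT ω]
      exact csSup_le (hneT ω) hub
    calc ENNReal.ofReal (rhat ω) ≤ ENNReal.ofReal C.toReal :=
          ENNReal.ofReal_le_ofReal hle
      _ = C := ENNReal.ofReal_toReal hCfin
  -- right continuity of V ω : V ω r = ⨅ k, V ω (r + 1/(k+1))
  have hVrc : ∀ (ω : Ω) (r : ℝ), V ω r = ⨅ k : ℕ, V ω (r + 1 / (k + 1)) := by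
    intro ω r
    have hseq : Filter.Tendsto (fun k : ℕ => r + 1 / (k + 1 : ℝ)) Filter.atTop (nhds r) := by
      have := tendsto_one_div_add_atTop_nhds_zero_nat (𝕜 := ℝ)
      simpa using (tendsto_const_nhds (x := r)).add this
    have hβseq : Filter.Tendsto (fun k : ℕ => β (r + 1 / (k + 1 : ℝ)))
        Filter.atTop (nhds (β r)) := by
      apply (hβrc r).tendsto.comp
      rw [tendsto_nhdsWithin_iff]
      refine ⟨hseq, Filter.Eventually.of_forall fun k => ?_⟩
      have : (0:ℝ) < 1 / (k + 1 : ℝ) := by positivity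
      exact le_of_lt (by linarith : r < r + 1 / (k + 1 : ℝ))
    have hinter : {h | p ω h ≤ α * π h * β r} =
        ⋂ k : ℕ, {h | p ω h ≤ α * π h * β (r + 1 / (k + 1))} := by
      ext h
      simp only [mem_iInter, mem_setOf_eq]
      constructor
      · intro hh k
        exact hsetmono ω (le_add_of_nonneg_right (by positivity : (0:ℝ) ≤ 1 / (k + 1 : ℝ))) hh
      · intro hh
        have htends : Filter.Tendsto (fun k : ℕ => α * π h * β (r + 1 / (k + 1 : ℝ)))
            Filter.atTop (nhds (α * π h * β r)) := tendsto_const_nhds.mul hβseq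
        exact ge_of_tendsto htends (Filter.Eventually.of_forall hh)
    rw [hVdef]
    simp only
    rw [hinter]
    apply Directed.measure_iInter
    · intro k
      exact (hsecmeas ω _).nullMeasurableSet
    · intro i j
      refine ⟨max i j, ?_, ?_⟩
      · apply hsetmono ω
        have : (1:ℝ) / (max i j + 1) ≤ 1 / (i + 1) := by
          apply one_div_le_one_div_of_le (by positivity)
          have := le_max_left i j
          push_cast
          exact by exact_mod_cast add_le_add_left (Nat.cast_le.2 (le_max_left i j)) 1
        linarith
      · apply hsetmono ω
        have : (1:ℝ) / (max i j + 1) ≤ 1 / (j + 1) := by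
          apply one_div_le_one_div_of_le (by positivity)
          exact by exact_mod_cast add_le_add_left (Nat.cast_le.2 (le_max_right i j)) 1
        linarith
    · exact ⟨0, ne_top_of_le_ne_top hΛfin (measure_mono (subset_univ _))⟩
  -- countable characterization of {ω | c ≤ rhat ω}
  have hchar : ∀ (c : ℝ) (ω : Ω), c ≤ rhat ω ↔
      ∀ n : ℕ, ∃ q : ℚ, c ≤ (q:ℝ) ∧
        ENNReal.ofReal ((q:ℝ) - 1 / (n + 1)) ≤ V ω (q:ℝ) := by
    intro c ω
    constructor
    · intro hc n
      obtain ⟨q, hq1, hq2⟩ := exists_rat_btwn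
        (show rhat ω < rhat ω + 1 / (n + 1 : ℝ) from
          lt_add_of_pos_right _ (by positivity))
      refine ⟨q, le_trans hc (le_of_lt hq1), ?_⟩
      have h1 : (q:ℝ) - 1 / (n + 1) ≤ rhat ω := by linarith
      calc ENNReal.ofReal ((q:ℝ) - 1 / (n + 1)) ≤ ENNReal.ofReal (rhat ω) :=
            ENNReal.ofReal_le_ofReal h1
        _ ≤ V ω (rhat ω) := hmax ω
        _ ≤ V ω q := hVmono ω (le_of_lt hq1)
    · intro hex
      choose q hq1 hq2 using hex
      have hqmem : ∀ n, (q n : ℝ) ∈ Icc c (M + 1) := by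
        intro n
        refine ⟨hq1 n, ?_⟩
        have h1 : ENNReal.ofReal ((q n : ℝ) - 1 / (n + 1)) ≤ Λ univ :=
          le_trans (hq2 n) (measure_mono (subset_univ _))
        have h2 : (q n : ℝ) - 1 / (n + 1) ≤ M :=
          (ENNReal.ofReal_le_iff_le_toReal hΛfin).1 h1
        have h3 : 1 / (n + 1 : ℝ) ≤ 1 := by
          rw [div_le_one (by positivity)]
          linarith [Nat.cast_nonneg (α := ℝ) n]
        linarith
      obtain ⟨r, hrmem, φ, hφ, hconv⟩ :=
        (isCompact_Icc (a := c) (b := M + 1)).tendsto_subseq hqmem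
      have hkey : ENNReal.ofReal r ≤ V ω r := by
        rw [hVrc ω r]
        refine le_iInf fun k => ?_
        have hδ : (0:ℝ) < 1 / (k + 1 : ℝ) := by positivity
        have hev : ∀ᶠ n in Filter.atTop,
            ((fun n => (q (φ n) : ℝ)) n) < r + 1 / (k + 1) :=
          hconv.eventually_lt_const (by linarith)
        have htend0 : Filter.Tendsto (fun n : ℕ => 1 / (φ n + 1 : ℝ))
            Filter.atTop (nhds 0) := by
          refine squeeze_zero (fun n => by positivity) (fun n => ?_)
            tendsto_one_div_add_atTop_nhds_zero_nat
          apply one_div_le_one_div_of_le (by positivity)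
          have hn := hφ.le_apply (x := n)
          have : (n : ℝ) ≤ (φ n : ℝ) := by exact_mod_cast hn
          linarith
        have htendr : Filter.Tendsto
            (fun n : ℕ => ENNReal.ofReal ((q (φ n) : ℝ) - 1 / (φ n + 1)))
            Filter.atTop (nhds (ENNReal.ofReal r)) := by
          have h4 : Filter.Tendsto (fun n : ℕ => (q (φ n) : ℝ) - 1 / (φ n + 1))
              Filter.atTop (nhds (r - 0)) := hconv.sub htend0
          rw [sub_zero] at h4
          exact (ENNReal.continuous_ofReal.tendsto r).comp h4
        refine le_of_tendsto htendr ?_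
        filter_upwards [hev] with n hn
        calc ENNReal.ofReal ((q (φ n) : ℝ) - 1 / (φ n + 1)) ≤ V ω (q (φ n)) := hq2 (φ n)
          _ ≤ V ω (r + 1 / (k + 1)) := hVmono ω (le_of_lt hn)
      by_cases hr0' : 0 ≤ r
      · have hmem : r ∈ T ω := ⟨hr0', hkey⟩
        have : r ≤ rhat ω := by rw [hrhatT ω]; exact le_csSup (hbddT ω) hmem
        linarith [hrmem.1]
      · push_neg at hr0'
        linarith [hrmem.1, hr0 ω]
  -- measurability of rhat
  have hrhatmeas : Measurable rhat := by
    apply measurable_of_Ici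
    intro c
    have hset : rhat ⁻¹' Ici c = ⋂ n : ℕ, ⋃ q : ℚ,
        ({ω | c ≤ (q:ℝ)} ∩ {ω | ENNReal.ofReal ((q:ℝ) - 1 / (n + 1)) ≤ V ω (q:ℝ)}) := by
      ext ω
      simp only [mem_preimage, mem_Ici, mem_iInter, mem_iUnion, mem_inter_iff, mem_setOf_eq]
      exact hchar c ω
    rw [hset]
    refine MeasurableSet.iInter fun n => MeasurableSet.iUnion fun q => ?_
    refine MeasurableSet.inter ?_ ?_
    · by_cases hcq : c ≤ (q:ℝ) <;> simp [hcq]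
    · exact measurableSet_le measurable_const (hVmeas q)
  refine ⟨hrhatmeas, ?_⟩
  exact measurableSet_le hp
    ((measurable_const.mul (hπ.comp measurable_snd)).mul
      (hβm.comp (hrhatmeas.comp measurable_fst)))
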